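/- An ABB̄L̄-formula φ is satisfiable over a finite interval structure if and only if the formula φ ∨ ⟨B̄⟩φ ∨ ⟨A⟩φ ∨ ⟨A⟩⟨A⟩φ belongs to the atom labeling the initial point (0,1) of some finite compass structure. -/

import Mathlib

namespace ABBL

/-- Formulas of the interval temporal logic ABB̄L̄, built from propositional
variables (of type `P`) using negation, disjunction and the unary modal
operators ⟨A⟩, ⟨B⟩, ⟨B̄⟩, ⟨L̄⟩. -/
inductive Formula (P : Type) : Type
  | atom  : P → Formula P
  | neg   : Formula P → Formula P
  | or    : Formula P → Formula P → Formula P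
  | diaA  : Formula P → Formula P
  | diaB  : Formula P → Formula P
  | diaBb : Formula P → Formula P
  | diaLb : Formula P → Formula P

variable {P : Type}

/-- The set of subformulas of a formula. -/
def subf : Formula P → Set (Formula P)
  | .atom a   => {Formula.atom a}
  | .neg ψ    => insert (Formula.neg ψ) (subf ψ)
  | .or ψ χ   => insert (Formula.or ψ χ) (subf ψ ∪ subf χ)
  | .diaA ψ   => insert (Formula.diaA ψ) (subf ψ)
  | .diaB ψ   => insert (Formula.diaB ψ) (subf ψ)
  | .diaBb ψ  => insert (Formula.diaBb ψ) (subf ψ)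
  | .diaLb ψ  => insert (Formula.diaLb ψ) (subf ψ)

/-- The number `|φ|` of subformulas of `φ`. -/
noncomputable def numSub (φ : Formula P) : ℕ := (subf φ).ncard

/-- Negation, identifying `¬¬α` with `α`. -/
def negc : Formula P → Formula P
  | .neg ψ => ψ
  | ψ      => Formula.neg ψ

/-- The closure `Cl(φ)`: all subformulas of `φ` and their negations. -/
def Cl (φ : Formula P) : Set (Formula P) := subf φ ∪ negc '' subf φ

/-- The extended closure `Cl⁺(φ)`: `Cl(φ)` together with all formulas
`⟨R⟩α` and `¬⟨R⟩α` for `R ∈ {A,B,B̄,L̄}` and `α ∈ Cl(φ)`. -/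
def Clp (φ : Formula P) : Set (Formula P) :=
  Cl φ ∪ {ψ | ∃ α ∈ Cl φ,
    ψ = Formula.diaA α ∨ ψ = Formula.neg (Formula.diaA α) ∨
    ψ = Formula.diaB α ∨ ψ = Formula.neg (Formula.diaB α) ∨
    ψ = Formula.diaBb α ∨ ψ = Formula.neg (Formula.diaBb α) ∨
    ψ = Formula.diaLb α ∨ ψ = Formula.neg (Formula.diaLb α)}

/-- A `φ`-atom: a nonempty, maximal locally consistent subset of `Cl⁺(φ)`. -/
structure IsAtom (φ : Formula P) (F : Set (Formula P)) : Prop where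
  nonempty : F.Nonempty
  subset   : F ⊆ Clp φ
  negCond  : ∀ α ∈ Clp φ, (α ∈ F ↔ negc α ∉ F)
  orCond   : ∀ α β, Formula.or α β ∈ Clp φ → (Formula.or α β ∈ F ↔ α ∈ F ∨ β ∈ F)

/-- The observables of `F`: `Obs(F) = F ∩ Cl(φ)`. -/
def Obs (φ : Formula P) (F : Set (Formula P)) : Set (Formula P) := F ∩ Cl φ

/-- The `A`-requests of `F`. -/
def ReqA (φ : Formula P) (F : Set (Formula P)) : Set (Formula P) :=
  {α | α ∈ Cl φ ∧ Formula.diaA α ∈ F}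

/-- The `B`-requests of `F`. -/
def ReqB (φ : Formula P) (F : Set (Formula P)) : Set (Formula P) :=
  {α | α ∈ Cl φ ∧ Formula.diaB α ∈ F}

/-- The `B̄`-requests of `F`. -/
def ReqBb (φ : Formula P) (F : Set (Formula P)) : Set (Formula P) :=
  {α | α ∈ Cl φ ∧ Formula.diaBb α ∈ F}

/-- The `L̄`-requests of `F`. -/
def ReqLb (φ : Formula P) (F : Set (Formula P)) : Set (Formula P) :=
  {α | α ∈ Cl φ ∧ Formula.diaLb α ∈ F}

/-- The dependency relation `F →_A G`. -/
def DepA (φ : Formula P) (F G : Set (Formula P)) : Prop :=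
  ReqA φ F = Obs φ G ∪ ReqB φ G ∪ ReqBb φ G

/-- The dependency relation `F →_B G`. -/
def DepB (φ : Formula P) (F G : Set (Formula P)) : Prop :=
  (Obs φ F ∪ ReqBb φ F ⊆ ReqBb φ G) ∧
  (ReqBb φ G ⊆ Obs φ F ∪ ReqBb φ F ∪ ReqB φ F) ∧
  (Obs φ G ∪ ReqB φ G ⊆ ReqB φ F) ∧
  (ReqB φ F ⊆ Obs φ G ∪ ReqB φ G ∪ ReqBb φ G) ∧
  ReqLb φ F = ReqLb φ G

/-- The dependency relation `F →_L̄ G`. -/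
def DepLb (φ : Formula P) (F G : Set (Formula P)) : Prop :=
  Obs φ G ∪ ReqLb φ G ⊆ ReqLb φ F

/-! ### Interval structures and semantics -/

/-- Intervals `[x,y]` with `x < y` over a linear order `O`. -/
def Interval (O : Type) [LinearOrder O] : Type := {p : O × O // p.1 < p.2}

variable {O : Type} [LinearOrder O]

/-- Allen's "meets" relation: `[x,y] A [x',y']` iff `y = x'`. -/
def relA (I J : Interval O) : Prop := I.1.2 = J.1.1

/-- Allen's "begins" relation: `[x,y] B [x',y']` iff `x = x'` and `y' < y`. -/
def relB (I J : Interval O) : Prop := I.1.1 = J.1.1 ∧ J.1.2 < I.1.2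

/-- Allen's "begun by" relation: `[x,y] B̄ [x',y']` iff `x = x'` and `y < y'`. -/
def relBb (I J : Interval O) : Prop := I.1.1 = J.1.1 ∧ I.1.2 < J.1.2

/-- Allen's "before" relation: `[x,y] L̄ [x',y']` iff `y' < x`. -/
def relLb (I J : Interval O) : Prop := J.1.2 < I.1.1

/-- Satisfaction of a formula at an interval of an interval structure
`S = (I_O, σ)`, where `σ` is the labeling with sets of propositional variables. -/
def sat (σ : Interval O → Set P) : Formula P → Interval O → Prop
  | .atom a, I  => a ∈ σ I
  | .neg ψ, I   => ¬ sat σ ψ I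
  | .or ψ χ, I  => sat σ ψ I ∨ sat σ χ I
  | .diaA ψ, I  => ∃ J, relA I J ∧ sat σ ψ J
  | .diaB ψ, I  => ∃ J, relB I J ∧ sat σ ψ J
  | .diaBb ψ, I => ∃ J, relBb I J ∧ sat σ ψ J
  | .diaLb ψ, I => ∃ J, relLb I J ∧ sat σ ψ J

/-- A linear order is strongly discrete iff there are only finitely many
points between any two points. -/
def StronglyDiscrete (O : Type) [LinearOrder O] : Prop :=
  ∀ x y : O, (Set.Ioo x y).Finite

/-- The `φ`-type of an interval: the set of formulas of `Cl⁺(φ)` true at it. -/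
def TypeS (σ : Interval O → Set P) (φ : Formula P) (I : Interval O) : Set (Formula P) :=
  {α | α ∈ Clp φ ∧ sat σ α I}

/-! ### Compass structures over a linear order -/

/-- A (consistent and fulfilling) compass `φ`-structure over a linear order `O`:
a labeling of the points `(x,y)` with `x < y` (identified with intervals) by
`φ`-atoms, satisfying consistency and fulfillment. -/
structure IsCompass (φ : Formula P) (L : Interval O → Set (Formula P)) : Prop where
  isAtom : ∀ p, IsAtom φ (L p)
  consA  : ∀ p q, relA p q → DepA φ (L p) (L q)
  consB  : ∀ p q, relB p q → DepB φ (L p) (L q)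
  consLb : ∀ p q, relLb p q → DepLb φ (L p) (L q)
  fulA   : ∀ p, ∀ α ∈ ReqA φ (L p), ∃ q, relA p q ∧ α ∈ Obs φ (L q)
  fulB   : ∀ p, ∀ α ∈ ReqB φ (L p), ∃ q, relB p q ∧ α ∈ Obs φ (L q)
  fulBb  : ∀ p, ∀ α ∈ ReqBb φ (L p), ∃ q, relBb p q ∧ α ∈ Obs φ (L q)
  fulLb  : ∀ p, ∀ α ∈ ReqLb φ (L p), ∃ q, relLb p q ∧ α ∈ Obs φ (L q)

/-! ### Finite compass structures, over `O = {0,…,N−1}` -/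

/-- A finite compass structure of size `N` (consistency conditions only):
the points are the pairs `(x,y)` with `x < y < N`, and `L` gives the labeling
by `φ`-atoms. Consistency is required for the relations `A`, `B`, `L̄`. -/
structure IsPreCompass (φ : Formula P) (N : ℕ) (L : ℕ → ℕ → Set (Formula P)) : Prop where
  isAtom : ∀ x y, x < y → y < N → IsAtom φ (L x y)
  consA  : ∀ x y z, x < y → y < z → z < N → DepA φ (L x y) (L y z)
  consB  : ∀ x z y, x < z → z < y → y < N → DepB φ (L x y) (L x z)
  consLb : ∀ u v x y, u < v → v < x → x < y → y < N → DepLb φ (L x y) (L u v)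

/-- A (consistent and fulfilling) finite compass `φ`-structure of size `N`. -/
structure IsFinCompass (φ : Formula P) (N : ℕ) (L : ℕ → ℕ → Set (Formula P))
    extends IsPreCompass φ N L : Prop where
  fulA  : ∀ x y, x < y → y < N → ∀ α ∈ ReqA φ (L x y),
            ∃ z, y < z ∧ z < N ∧ α ∈ Obs φ (L y z)
  fulB  : ∀ x y, x < y → y < N → ∀ α ∈ ReqB φ (L x y),
            ∃ z, x < z ∧ z < y ∧ α ∈ Obs φ (L x z)
  fulBb : ∀ x y, x < y → y < N → ∀ α ∈ ReqBb φ (L x y),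
            ∃ z, y < z ∧ z < N ∧ α ∈ Obs φ (L x z)
  fulLb : ∀ x y, x < y → y < N → ∀ α ∈ ReqLb φ (L x y),
            ∃ u v, u < v ∧ v < x ∧ α ∈ Obs φ (L u v)

/-- The shading of row `y`: the set of atoms occurring on row `y`. -/
def Shading (L : ℕ → ℕ → Set (Formula P)) (y : ℕ) : Set (Set (Formula P)) :=
  {F | ∃ x, x < y ∧ L x y = F}

/-- The property (WIT) of a set of points `W` being a witness set for row `y`:
every `ψ ∈ Cl(φ)` appearing in the label of a point above row `y` has a witness
in `W` at minimal height above `y`. -/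
def WitProp (φ : Formula P) (N : ℕ) (L : ℕ → ℕ → Set (Formula P)) (y : ℕ)
    (W : Set (ℕ × ℕ)) : Prop :=
  (∀ p ∈ W, p.1 < p.2 ∧ p.2 < N ∧ y < p.2) ∧
  ∀ ψ ∈ Cl φ, (∃ x' y', x' < y' ∧ y' < N ∧ y < y' ∧ ψ ∈ L x' y') →
    ∃ p ∈ W, ψ ∈ L p.1 p.2 ∧
      ∀ x' y', x' < y' → y' < N → y < y' → y' < p.2 → negc ψ ∈ L x' y'

/-- A witness set for row `y`: a minimal set satisfying (WIT). -/
def IsWitSet (φ : Formula P) (N : ℕ) (L : ℕ → ℕ → Set (Formula P)) (y : ℕ)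
    (W : Set (ℕ × ℕ)) : Prop :=
  WitProp φ N L y W ∧ ∀ W' ⊆ W, WitProp φ N L y W' → W' = W

/-- `π_ȳ(S)`: the `x`-coordinates, smaller than `ȳ`, of the points in `S`. -/
def proj (ybar : ℕ) (S : Set (ℕ × ℕ)) : Set ℕ := {x | (∃ y, (x, y) ∈ S) ∧ x < ybar}

/-- Two rows `y0 < y1` of a finite compass structure are compatible. -/
def Compatible (φ : Formula P) (N : ℕ) (L : ℕ → ℕ → Set (Formula P))
    (y0 y1 : ℕ) : Prop :=
  Shading L y0 = Shading L y1 ∧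
  L (y0 - 1) y0 = L (y1 - 1) y1 ∧
  ∃ W, IsWitSet φ N L y1 W ∧
    ∃ w : ℕ → ℕ, Set.InjOn w (proj y1 W) ∧
      ∀ x ∈ proj y1 W, w x < y0 ∧ L x y1 = L (w x) y0

/-- `#(F,y)`: the number of points on row `y` labeled by `F`. -/
noncomputable def cnt (L : ℕ → ℕ → Set (Formula P)) (y : ℕ) (F : Set (Formula P)) : ℕ :=
  Set.ncard {x | x < y ∧ L x y = F}

/-- The characteristic function of row `y`: counts occurrences of each atom,
capped at `2|φ|`. -/
noncomputable def charFn (φ : Formula P) (L : ℕ → ℕ → Set (Formula P)) (y : ℕ)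
    (F : Set (Formula P)) : ℕ :=
  min (cnt L y F) (2 * numSub φ)

/-- The formula `ξ = φ ∨ ⟨B̄⟩φ ∨ ⟨A⟩φ ∨ ⟨A⟩⟨A⟩φ`. -/
def xi (φ : Formula P) : Formula P :=
  Formula.or (Formula.or (Formula.or φ (Formula.diaBb φ)) (Formula.diaA φ))
    (Formula.diaA (Formula.diaA φ))

/-! ### Partially fulfilling structures and compass generators -/

/-- A finite compass structure of size `N` is partially fulfilling: every
request of a point strictly below the top row `N-1` is either fulfilled or
transferred to the border. -/
def PartFulfilling (φ : Formula P) (N : ℕ) (L : ℕ → ℕ → Set (Formula P)) : Prop :=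
  ∀ x y, x < y → y < N - 1 →
    (∀ ψ ∈ ReqA φ (L x y),
        (∃ z, y < z ∧ z < N ∧ ψ ∈ Obs φ (L y z)) ∨ ψ ∈ ReqBb φ (L y (N - 1))) ∧
    (∀ ψ ∈ ReqB φ (L x y), ∃ z, x < z ∧ z < y ∧ ψ ∈ Obs φ (L x z)) ∧
    (∀ ψ ∈ ReqBb φ (L x y),
        (∃ z, y < z ∧ z < N ∧ ψ ∈ Obs φ (L x z)) ∨ ψ ∈ ReqBb φ (L x (N - 1))) ∧
    (∀ ψ ∈ ReqLb φ (L x y),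
        (∃ u v, u < v ∧ v < x ∧ ψ ∈ Obs φ (L u v)) ∨ ψ ∈ ReqLb φ (L 0 1))

/-- The defining property of a future witness set for row `y`. -/
def FutWitProp (φ : Formula P) (N : ℕ) (L : ℕ → ℕ → Set (Formula P)) (y : ℕ)
    (FW : Set ℕ) : Prop :=
  (∀ x ∈ FW, x < y) ∧
  ∀ F ∈ Shading L y, ∃ x ∈ FW, L x y = F ∧
    ∀ ψ ∈ ReqBb φ F, ∃ y', y < y' ∧ y' < N ∧ ψ ∈ Obs φ (L x y')

/-- A future witness set for row `y`: a minimal set satisfying `FutWitProp`. -/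
def IsFutWit (φ : Formula P) (N : ℕ) (L : ℕ → ℕ → Set (Formula P)) (y : ℕ)
    (FW : Set ℕ) : Prop :=
  FutWitProp φ N L y FW ∧ ∀ FW' ⊆ FW, FutWitProp φ N L y FW' → FW' = FW

/-- The defining property of a past witness set for row `y`. -/
def PastWitProp (φ : Formula P) (N : ℕ) (L : ℕ → ℕ → Set (Formula P)) (y : ℕ)
    (PW : Set (ℕ × ℕ)) : Prop :=
  (∀ p ∈ PW, p.1 < p.2 ∧ p.2 < N) ∧
  ∀ ψ ∈ ReqLb φ (L (y - 1) y), ∃ p ∈ PW, ψ ∈ Obs φ (L p.1 p.2) ∧ p.2 < y - 1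

/-- A past witness set for row `y`: a minimal set satisfying `PastWitProp`. -/
def IsPastWit (φ : Formula P) (N : ℕ) (L : ℕ → ℕ → Set (Formula P)) (y : ℕ)
    (PW : Set (ℕ × ℕ)) : Prop :=
  PastWitProp φ N L y PW ∧ ∀ PW' ⊆ PW, PastWitProp φ N L y PW' → PW' = PW

/-- Conditions (G1)–(G6) on the four distinguished rows of a compass generator. -/
structure GenRows (φ : Formula P) (N : ℕ) (L : ℕ → ℕ → Set (Formula P))
    (yφ y0 y1 y2 : ℕ) : Prop where
  rowφpos : 0 < yφ
  rowφlt  : yφ < N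
  row0pos : 0 < y0
  row2lt  : y2 < N
  g1a : y0 < y1
  g1b : y1 < y2
  g1c : y0 ≤ yφ
  g2  : φ ∈ L (yφ - 1) yφ ∨ Formula.diaBb φ ∈ L (yφ - 1) yφ
  g3a : Shading L y1 ⊆ Shading L y0
  g3b : L (y0 - 1) y0 = L (y1 - 1) y1
  g4  : ∃ PW, IsPastWit φ N L y1 PW ∧ ∀ x ∈ proj y1 PW, y0 ≤ x
  g5a : Shading L (N - 1) ⊆ Shading L y2
  g5b : L (y2 - 1) y2 = L (N - 2) (N - 1)
  g6  : ∃ FW, IsFutWit φ N L y2 FW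

/-- A compass generator for `φ`: a finite, partially fulfilling compass
structure admitting four rows satisfying (G1)–(G6). -/
structure IsCompassGen (φ : Formula P) (N : ℕ) (L : ℕ → ℕ → Set (Formula P)) : Prop where
  pre     : IsPreCompass φ N L
  partFul : PartFulfilling φ N L
  rows    : ∃ yφ y0 y1 y2, GenRows φ N L yφ y0 y1 y2

/-- Global compatibility of two rows `y < y'` of a compass generator with
distinguished rows `yφ, y0, y1, y2`. -/
def GlobCompatible (φ : Formula P) (N : ℕ) (L : ℕ → ℕ → Set (Formula P))
    (yφ y0 y1 y2 y y' : ℕ) : Prop :=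
  L (y - 1) y = L (y' - 1) y' ∧ Shading L y = Shading L y' ∧
  (∀ ybar ∈ ({yφ, y0, y1, y2} : Set ℕ), ¬ (y ≤ ybar ∧ ybar ≤ y')) ∧
  ∃ PW FW,
    IsPastWit φ N L y1 PW ∧
    (∀ p ∈ PW, ¬ (y ≤ p.2 ∧ p.2 ≤ y')) ∧
    IsFutWit φ N L y2 FW ∧
    (∀ xbar ∈ FW, ∀ ψ ∈ ReqBb φ (L xbar y2),
      ∃ ybar, y2 < ybar ∧ ybar < N ∧ ψ ∈ Obs φ (L xbar ybar) ∧ ¬ (y ≤ ybar ∧ ybar ≤ y')) ∧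
    ∃ W, IsWitSet φ N L y' W ∧
      ∃ w : ℕ → ℕ,
        Set.InjOn w (proj y' (W ∪ PW ∪ (fun x => (x, y2)) '' FW)) ∧
        (∀ x ∈ proj y' (W ∪ PW ∪ (fun x => (x, y2)) '' FW),
          w x < y ∧ L x y' = L (w x) y) ∧
        (∀ x ∈ proj y' PW, w x = x)

/-! ### Auxiliary lemmas for Statement 17 -/

section Aux17

variable {P : Type}

lemma subf_self (φ : Formula P) : φ ∈ subf φ := by
  cases φ <;> simp [subf]

lemma subf_trans {φ ψ : Formula P} (h : ψ ∈ subf φ) : subf ψ ⊆ subf φ := by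
  induction φ with
  | atom a =>
    simp only [subf, Set.mem_singleton_iff] at h
    subst h; exact subset_rfl
  | neg χ ih =>
    simp only [subf, Set.mem_insert_iff] at h
    rcases h with h | h
    · subst h; exact subset_rfl
    · exact (ih h).trans (Set.subset_insert _ _)
  | or χ₁ χ₂ ih1 ih2 =>
    simp only [subf, Set.mem_insert_iff, Set.mem_union] at h
    rcases h with h | h | h
    · subst h; exact subset_rfl
    · exact (ih1 h).trans (Set.subset_union_left.trans (Set.subset_insert _ _))
    · exact (ih2 h).trans (Set.subset_union_right.trans (Set.subset_insert _ _))
  | diaA χ ih =>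
    simp only [subf, Set.mem_insert_iff] at h
    rcases h with h | h
    · subst h; exact subset_rfl
    · exact (ih h).trans (Set.subset_insert _ _)
  | diaB χ ih =>
    simp only [subf, Set.mem_insert_iff] at h
    rcases h with h | h
    · subst h; exact subset_rfl
    · exact (ih h).trans (Set.subset_insert _ _)
  | diaBb χ ih =>
    simp only [subf, Set.mem_insert_iff] at h
    rcases h with h | h
    · subst h; exact subset_rfl
    · exact (ih h).trans (Set.subset_insert _ _)
  | diaLb χ ih =>
    simp only [subf, Set.mem_insert_iff] at h
    rcases h with h | h
    · subst h; exact subset_rfl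
    · exact (ih h).trans (Set.subset_insert _ _)

lemma negc_cases (β : Formula P) :
    (∃ γ, β = Formula.neg γ ∧ negc β = γ) ∨ negc β = Formula.neg β := by
  cases β
  case neg γ => exact Or.inl ⟨γ, rfl, rfl⟩
  all_goals exact Or.inr rfl

lemma subf_cl {ξ : Formula P} : subf ξ ⊆ Cl ξ := Set.subset_union_left

lemma cl_clp {ξ : Formula P} : Cl ξ ⊆ Clp ξ := Set.subset_union_left

lemma cl_cases {ξ α : Formula P} (h : α ∈ Cl ξ) :
    α ∈ subf ξ ∨ ∃ γ, γ ∈ subf ξ ∧ α = Formula.neg γ := by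
  rcases h with h | ⟨β, hβ, rfl⟩
  · exact Or.inl h
  · rcases negc_cases β with ⟨γ, rfl, hg⟩ | hg
    · rw [hg]
      exact Or.inl (subf_trans hβ (by simp [subf, subf_self]))
    · rw [hg]
      exact Or.inr ⟨β, hβ, rfl⟩

lemma cl_neg {ξ ψ : Formula P} (h : Formula.neg ψ ∈ Cl ξ) : ψ ∈ Cl ξ := by
  rcases cl_cases h with h | ⟨γ, hγ, he⟩
  · exact subf_cl (subf_trans h (by simp [subf, subf_self]))
  · injection he with he; subst he; exact subf_cl hγ

lemma cl_or' {ξ α β : Formula P} (h : Formula.or α β ∈ Cl ξ) : α ∈ Cl ξ ∧ β ∈ Cl ξ := by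
  rcases cl_cases h with h | ⟨γ, _, he⟩
  · exact ⟨subf_cl (subf_trans h (by simp [subf, subf_self])),
      subf_cl (subf_trans h (by simp [subf, subf_self]))⟩
  · exact absurd he (by simp)

lemma cl_diaA' {ξ ψ : Formula P} (h : Formula.diaA ψ ∈ Cl ξ) : ψ ∈ Cl ξ := by
  rcases cl_cases h with h | ⟨γ, _, he⟩
  · exact subf_cl (subf_trans h (by simp [subf, subf_self]))
  · exact absurd he (by simp)

lemma cl_diaB' {ξ ψ : Formula P} (h : Formula.diaB ψ ∈ Cl ξ) : ψ ∈ Cl ξ := by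
  rcases cl_cases h with h | ⟨γ, _, he⟩
  · exact subf_cl (subf_trans h (by simp [subf, subf_self]))
  · exact absurd he (by simp)

lemma cl_diaBb' {ξ ψ : Formula P} (h : Formula.diaBb ψ ∈ Cl ξ) : ψ ∈ Cl ξ := by
  rcases cl_cases h with h | ⟨γ, _, he⟩
  · exact subf_cl (subf_trans h (by simp [subf, subf_self]))
  · exact absurd he (by simp)

lemma cl_diaLb' {ξ ψ : Formula P} (h : Formula.diaLb ψ ∈ Cl ξ) : ψ ∈ Cl ξ := by
  rcases cl_cases h with h | ⟨γ, _, he⟩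
  · exact subf_cl (subf_trans h (by simp [subf, subf_self]))
  · exact absurd he (by simp)

lemma clp_diaA {ξ α : Formula P} (h : α ∈ Cl ξ) : Formula.diaA α ∈ Clp ξ :=
  Or.inr ⟨α, h, Or.inl rfl⟩

lemma clp_diaB {ξ α : Formula P} (h : α ∈ Cl ξ) : Formula.diaB α ∈ Clp ξ :=
  Or.inr ⟨α, h, Or.inr (Or.inr (Or.inl rfl))⟩

lemma clp_diaBb {ξ α : Formula P} (h : α ∈ Cl ξ) : Formula.diaBb α ∈ Clp ξ :=
  Or.inr ⟨α, h, Or.inr (Or.inr (Or.inr (Or.inr (Or.inl rfl))))⟩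

lemma clp_diaLb {ξ α : Formula P} (h : α ∈ Cl ξ) : Formula.diaLb α ∈ Clp ξ :=
  Or.inr ⟨α, h, Or.inr (Or.inr (Or.inr (Or.inr (Or.inr (Or.inr (Or.inl rfl))))))⟩

lemma clp_or' {ξ α β : Formula P} (h : Formula.or α β ∈ Clp ξ) : Formula.or α β ∈ Cl ξ := by
  rcases h with h | ⟨γ, _, hc⟩
  · exact h
  · rcases hc with h|h|h|h|h|h|h|h <;> exact absurd h (by simp)

lemma clp_neg_of_negc {ξ α : Formula P} (h : α ∈ Clp ξ) (hn : negc α = Formula.neg α) :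
    Formula.neg α ∈ Clp ξ := by
  rcases h with h | ⟨β, hβ, hc⟩
  · rcases cl_cases h with h1 | ⟨γ, hγ, rfl⟩
    · exact cl_clp (Or.inr ⟨α, h1, hn⟩)
    · exfalso
      have h2 : negc (Formula.neg γ) = γ := rfl
      rw [h2] at hn
      have h3 := congrArg (fun t : Formula P => sizeOf t) hn
      simp at h3; omega
  · rcases hc with rfl|rfl|rfl|rfl|rfl|rfl|rfl|rfl
    · exact Or.inr ⟨β, hβ, Or.inr (Or.inl rfl)⟩
    · exact absurd hn (by simp [negc])
    · exact Or.inr ⟨β, hβ, Or.inr (Or.inr (Or.inr (Or.inl rfl)))⟩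
    · exact absurd hn (by simp [negc])
    · exact Or.inr ⟨β, hβ, Or.inr (Or.inr (Or.inr (Or.inr (Or.inr (Or.inl rfl)))))⟩
    · exact absurd hn (by simp [negc])
    · exact Or.inr ⟨β, hβ, Or.inr (Or.inr (Or.inr (Or.inr (Or.inr (Or.inr (Or.inr rfl))))))⟩
    · exact absurd hn (by simp [negc])

lemma clp_negc {ξ α : Formula P} (h : α ∈ Clp ξ) : negc α ∈ Clp ξ := by
  rcases negc_cases α with ⟨γ, rfl, hg⟩ | hg
  · rw [hg]
    rcases h with h | ⟨β, hβ, hc⟩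
    · exact cl_clp (cl_neg h)
    · rcases hc with h|h|h|h|h|h|h|h
      · exact absurd h (by simp)
      · injection h with h; subst h; exact Or.inr ⟨β, hβ, Or.inl rfl⟩
      · exact absurd h (by simp)
      · injection h with h; subst h; exact Or.inr ⟨β, hβ, Or.inr (Or.inr (Or.inl rfl))⟩
      · exact absurd h (by simp)
      · injection h with h; subst h
        exact Or.inr ⟨β, hβ, Or.inr (Or.inr (Or.inr (Or.inr (Or.inl rfl))))⟩
      · exact absurd h (by simp)
      · injection h with h; subst h
        exact Or.inr ⟨β, hβ, Or.inr (Or.inr (Or.inr (Or.inr (Or.inr (Or.inr (Or.inl rfl))))))⟩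
  · rw [hg]; exact clp_neg_of_negc h hg

variable {O : Type} [LinearOrder O]

lemma sat_negc (σ : Interval O → Set P) (α : Formula P) (I : Interval O) :
    sat σ (negc α) I ↔ ¬ sat σ α I := by
  rcases negc_cases α with ⟨γ, rfl, hg⟩ | hg
  · rw [hg]
    show sat σ γ I ↔ ¬ sat σ (Formula.neg γ) I
    simp [sat]
  · rw [hg]; exact Iff.rfl

lemma sat_congr {σ : Interval O → Set P} {α : Formula P} {a b : O} {hab : a < b}
    {J : Interval O} (h1 : a = J.1.1) (h2 : b = J.1.2) (hs : sat σ α J) :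
    sat σ α ⟨(a, b), hab⟩ := by
  subst h1; subst h2; exact hs

lemma interval_ext {I J : Interval O} (h1 : I.1.1 = J.1.1) (h2 : I.1.2 = J.1.2) : I = J :=
  Subtype.ext (Prod.ext h1 h2)

lemma obs_typeS (σ : Interval O → Set P) (ξ : Formula P) (I : Interval O) :
    Obs ξ (TypeS σ ξ I) = {α | α ∈ Cl ξ ∧ sat σ α I} := by
  ext α
  simp only [Obs, TypeS, Set.mem_inter_iff, Set.mem_setOf_eq]
  exact ⟨fun h => ⟨h.2, h.1.2⟩, fun h => ⟨⟨cl_clp h.1, h.2⟩, h.1⟩⟩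

lemma reqA_typeS (σ : Interval O → Set P) (ξ : Formula P) (I : Interval O) :
    ReqA ξ (TypeS σ ξ I) = {α | α ∈ Cl ξ ∧ ∃ J, relA I J ∧ sat σ α J} := by
  ext α
  simp only [ReqA, TypeS, Set.mem_setOf_eq]
  exact ⟨fun h => ⟨h.1, h.2.2⟩, fun h => ⟨h.1, clp_diaA h.1, h.2⟩⟩

lemma reqB_typeS (σ : Interval O → Set P) (ξ : Formula P) (I : Interval O) :
    ReqB ξ (TypeS σ ξ I) = {α | α ∈ Cl ξ ∧ ∃ J, relB I J ∧ sat σ α J} := by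
  ext α
  simp only [ReqB, TypeS, Set.mem_setOf_eq]
  exact ⟨fun h => ⟨h.1, h.2.2⟩, fun h => ⟨h.1, clp_diaB h.1, h.2⟩⟩

lemma reqBb_typeS (σ : Interval O → Set P) (ξ : Formula P) (I : Interval O) :
    ReqBb ξ (TypeS σ ξ I) = {α | α ∈ Cl ξ ∧ ∃ J, relBb I J ∧ sat σ α J} := by
  ext α
  simp only [ReqBb, TypeS, Set.mem_setOf_eq]
  exact ⟨fun h => ⟨h.1, h.2.2⟩, fun h => ⟨h.1, clp_diaBb h.1, h.2⟩⟩

lemma reqLb_typeS (σ : Interval O → Set P) (ξ : Formula P) (I : Interval O) :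
    ReqLb ξ (TypeS σ ξ I) = {α | α ∈ Cl ξ ∧ ∃ J, relLb I J ∧ sat σ α J} := by
  ext α
  simp only [ReqLb, TypeS, Set.mem_setOf_eq]
  exact ⟨fun h => ⟨h.1, h.2.2⟩, fun h => ⟨h.1, clp_diaLb h.1, h.2⟩⟩

lemma typeS_isAtom (σ : Interval O → Set P) (ξ : Formula P) (I : Interval O) :
    IsAtom ξ (TypeS σ ξ I) := by
  have hξ : ξ ∈ Clp ξ := cl_clp (subf_cl (subf_self ξ))
  refine ⟨?_, fun α h => h.1, ?_, ?_⟩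
  · by_cases h : sat σ ξ I
    · exact ⟨ξ, hξ, h⟩
    · exact ⟨negc ξ, clp_negc hξ, (sat_negc σ ξ I).mpr h⟩
  · intro α hα
    constructor
    · rintro ⟨_, hs⟩ ⟨_, hns⟩
      exact ((sat_negc σ α I).mp hns) hs
    · intro hn
      refine ⟨hα, ?_⟩
      by_contra hs
      exact hn ⟨clp_negc hα, (sat_negc σ α I).mpr hs⟩
  · intro α β h
    obtain ⟨ha, hb⟩ := cl_or' (clp_or' h)
    constructor
    · intro h1
      have h2 : sat σ α I ∨ sat σ β I := h1.2
      rcases h2 with hs | hs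
      · exact Or.inl ⟨cl_clp ha, hs⟩
      · exact Or.inr ⟨cl_clp hb, hs⟩
    · intro h1
      refine ⟨h, ?_⟩
      show sat σ α I ∨ sat σ β I
      rcases h1 with ⟨_, hs⟩ | ⟨_, hs⟩
      · exact Or.inl hs
      · exact Or.inr hs

lemma depA_typeS {σ : Interval O → Set P} {ξ : Formula P} {I J : Interval O}
    (h : relA I J) : DepA ξ (TypeS σ ξ I) (TypeS σ ξ J) := by
  have h' : I.1.2 = J.1.1 := h
  unfold DepA
  rw [reqA_typeS, obs_typeS, reqB_typeS, reqBb_typeS]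
  ext α
  simp only [Set.mem_union, Set.mem_setOf_eq]
  constructor
  · rintro ⟨h1, K, hrel, hK⟩
    have hr : I.1.2 = K.1.1 := hrel
    rcases lt_trichotomy K.1.2 J.1.2 with hlt | heq | hgt
    · exact Or.inl (Or.inr ⟨h1, K, ⟨h'.symm.trans hr, hlt⟩, hK⟩)
    · have hKJ : K = J := interval_ext (hr.symm.trans h') heq
      exact Or.inl (Or.inl ⟨h1, hKJ ▸ hK⟩)
    · exact Or.inr ⟨h1, K, ⟨h'.symm.trans hr, hgt⟩, hK⟩
  · rintro ((⟨h1, hs⟩ | ⟨h1, K, hrel, hK⟩) | ⟨h1, K, hrel, hK⟩)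
    · exact ⟨h1, J, h', hs⟩
    · obtain ⟨hr1, -⟩ : J.1.1 = K.1.1 ∧ K.1.2 < J.1.2 := hrel
      exact ⟨h1, K, h'.trans hr1, hK⟩
    · obtain ⟨hr1, -⟩ : J.1.1 = K.1.1 ∧ J.1.2 < K.1.2 := hrel
      exact ⟨h1, K, h'.trans hr1, hK⟩

lemma depB_typeS {σ : Interval O → Set P} {ξ : Formula P} {I J : Interval O}
    (h : relB I J) : DepB ξ (TypeS σ ξ I) (TypeS σ ξ J) := by
  obtain ⟨h1, h2⟩ : I.1.1 = J.1.1 ∧ J.1.2 < I.1.2 := h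
  unfold DepB
  simp only [reqBb_typeS, obs_typeS, reqB_typeS, reqLb_typeS]
  refine ⟨?_, ?_, ?_, ?_, ?_⟩
  · rintro α (⟨hc, hs⟩ | ⟨hc, K, hrel, hK⟩)
    · exact ⟨hc, I, ⟨h1.symm, h2⟩, hs⟩
    · obtain ⟨hr1, hr2⟩ : I.1.1 = K.1.1 ∧ I.1.2 < K.1.2 := hrel
      exact ⟨hc, K, ⟨h1.symm.trans hr1, h2.trans hr2⟩, hK⟩
  · rintro α ⟨hc, K, hrel, hK⟩
    obtain ⟨hr1, hr2⟩ : J.1.1 = K.1.1 ∧ J.1.2 < K.1.2 := hrel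
    rcases lt_trichotomy K.1.2 I.1.2 with hlt | heq | hgt
    · exact Or.inr ⟨hc, K, ⟨h1.trans hr1, hlt⟩, hK⟩
    · have hKI : K = I := interval_ext (hr1.symm.trans h1.symm) heq
      exact Or.inl (Or.inl ⟨hc, hKI ▸ hK⟩)
    · exact Or.inl (Or.inr ⟨hc, K, ⟨h1.trans hr1, hgt⟩, hK⟩)
  · rintro α (⟨hc, hs⟩ | ⟨hc, K, hrel, hK⟩)
    · exact ⟨hc, J, ⟨h1, h2⟩, hs⟩
    · obtain ⟨hr1, hr2⟩ : J.1.1 = K.1.1 ∧ K.1.2 < J.1.2 := hrel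
      exact ⟨hc, K, ⟨h1.trans hr1, hr2.trans h2⟩, hK⟩
  · rintro α ⟨hc, K, hrel, hK⟩
    obtain ⟨hr1, hr2⟩ : I.1.1 = K.1.1 ∧ K.1.2 < I.1.2 := hrel
    rcases lt_trichotomy K.1.2 J.1.2 with hlt | heq | hgt
    · exact Or.inl (Or.inr ⟨hc, K, ⟨h1.symm.trans hr1, hlt⟩, hK⟩)
    · have hKJ : K = J := interval_ext (hr1.symm.trans h1) heq
      exact Or.inl (Or.inl ⟨hc, hKJ ▸ hK⟩)
    · exact Or.inr ⟨hc, K, ⟨h1.symm.trans hr1, hgt⟩, hK⟩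
  · ext α
    simp only [Set.mem_setOf_eq]
    constructor
    · rintro ⟨hc, K, hrel, hK⟩
      have hr : K.1.2 < I.1.1 := hrel
      exact ⟨hc, K, show K.1.2 < J.1.1 from h1 ▸ hr, hK⟩
    · rintro ⟨hc, K, hrel, hK⟩
      have hr : K.1.2 < J.1.1 := hrel
      exact ⟨hc, K, show K.1.2 < I.1.1 from h1.symm ▸ hr, hK⟩

lemma depLb_typeS {σ : Interval O → Set P} {ξ : Formula P} {I J : Interval O}
    (h : relLb I J) : DepLb ξ (TypeS σ ξ I) (TypeS σ ξ J) := by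
  have h' : J.1.2 < I.1.1 := h
  unfold DepLb
  simp only [obs_typeS, reqLb_typeS]
  rintro α (⟨hc, hs⟩ | ⟨hc, K, hrel, hK⟩)
  · exact ⟨hc, J, h', hs⟩
  · have hr : K.1.2 < J.1.1 := hrel
    exact ⟨hc, K, hr.trans (J.2.trans h'), hK⟩

/-- The compass labeling induced by an interval structure over a finite order. -/
def typeL {O : Type} [LinearOrder O] {N : ℕ} (σ : Interval O → Set P) (ξ : Formula P)
    (e : Fin N ≃o O) (x y : ℕ) : Set (Formula P) :=
  if h : x < y ∧ y < N then
    TypeS σ ξ ⟨(e ⟨x, h.1.trans h.2⟩, e ⟨y, h.2⟩), e.strictMono (Fin.mk_lt_mk.mpr h.1)⟩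
  else ∅

lemma typeL_eq {N : ℕ} (σ : Interval O → Set P) (ξ : Formula P) (e : Fin N ≃o O)
    {x y : ℕ} (hxy : x < y) (hy : y < N) :
    typeL σ ξ e x y =
      TypeS σ ξ ⟨(e ⟨x, hxy.trans hy⟩, e ⟨y, hy⟩), e.strictMono (Fin.mk_lt_mk.mpr hxy)⟩ :=
  dif_pos ⟨hxy, hy⟩

end Aux17

/-- The truth lemma: in a finite compass structure, membership in the labeling
atom coincides with satisfaction for every formula of the closure. -/
lemma truth_lemma {P : Type} {N : ℕ} {ξ : Formula P} {L : ℕ → ℕ → Set (Formula P)}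
    (hC : IsFinCompass ξ N L) :
    ∀ α : Formula P, α ∈ Cl ξ → ∀ I : Interval (Fin N),
      (α ∈ L I.1.1 I.1.2 ↔
        sat (fun J : Interval (Fin N) => {a | Formula.atom a ∈ L J.1.1 J.1.2}) α I) := by
  intro α
  induction α with
  | atom a =>
    intro _ I
    exact Iff.rfl
  | neg ψ ih =>
    intro hα I
    have hψ : ψ ∈ Cl ξ := cl_neg hα
    have hxy : (I.1.1 : ℕ) < I.1.2 := I.2
    have hat := hC.isAtom _ _ hxy I.1.2.isLt
    rw [hat.negCond (Formula.neg ψ) (cl_clp hα)]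
    have h2 : negc (Formula.neg ψ) = ψ := rfl
    rw [h2]
    exact not_congr (ih hψ I)
  | or ψ χ ih1 ih2 =>
    intro hα I
    obtain ⟨hψ, hχ⟩ := cl_or' hα
    have hxy : (I.1.1 : ℕ) < I.1.2 := I.2
    have hat := hC.isAtom _ _ hxy I.1.2.isLt
    rw [hat.orCond ψ χ (cl_clp hα)]
    constructor
    · rintro (h | h)
      · exact Or.inl ((ih1 hψ I).mp h)
      · exact Or.inr ((ih2 hχ I).mp h)
    · intro h
      rcases (show sat _ ψ I ∨ sat _ χ I from h) with h | h
      · exact Or.inl ((ih1 hψ I).mpr h)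
      · exact Or.inr ((ih2 hχ I).mpr h)
  | diaA ψ ih =>
    intro hα I
    have hψ : ψ ∈ Cl ξ := cl_diaA' hα
    have hxy : (I.1.1 : ℕ) < I.1.2 := I.2
    have hyN : (I.1.2 : ℕ) < N := I.1.2.isLt
    constructor
    · intro hm
      obtain ⟨z, hz1, hz2, hobs⟩ := hC.fulA _ _ hxy hyN ψ ⟨hψ, hm⟩
      refine ⟨⟨(I.1.2, ⟨z, hz2⟩), Fin.lt_def.mpr hz1⟩, rfl, ?_⟩
      exact (ih hψ _).mp hobs.1
    · intro hs
      obtain ⟨J, hrel, hJ⟩ : ∃ J, relA I J ∧ sat _ ψ J := hs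
      have hr : I.1.2 = J.1.1 := hrel
      have hJ2 : (I.1.2 : ℕ) < J.1.2 := by rw [hr]; exact J.2
      have hdep := hC.consA I.1.1 I.1.2 J.1.2 hxy hJ2 J.1.2.isLt
      have hmem : ψ ∈ L I.1.2 J.1.2 := by
        have h3 := (ih hψ J).mpr hJ
        rwa [← hr] at h3
      unfold DepA at hdep
      have h4 : ψ ∈ ReqA ξ (L I.1.1 I.1.2) := by
        rw [hdep]
        exact Or.inl (Or.inl ⟨hmem, hψ⟩)
      exact h4.2
  | diaB ψ ih =>
    intro hα I
    have hψ : ψ ∈ Cl ξ := cl_diaB' hα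
    have hxy : (I.1.1 : ℕ) < I.1.2 := I.2
    have hyN : (I.1.2 : ℕ) < N := I.1.2.isLt
    constructor
    · intro hm
      obtain ⟨z, hz1, hz2, hobs⟩ := hC.fulB _ _ hxy hyN ψ ⟨hψ, hm⟩
      refine ⟨⟨(I.1.1, ⟨z, hz2.trans hyN⟩), Fin.lt_def.mpr hz1⟩,
        ⟨rfl, Fin.lt_def.mpr hz2⟩, ?_⟩
      exact (ih hψ _).mp hobs.1
    · intro hs
      obtain ⟨J, hrel, hJ⟩ : ∃ J, relB I J ∧ sat _ ψ J := hs
      obtain ⟨hr1, hr2⟩ : I.1.1 = J.1.1 ∧ J.1.2 < I.1.2 := hrel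
      have hxz : (I.1.1 : ℕ) < J.1.2 := by rw [hr1]; exact J.2
      have hdep := hC.consB I.1.1 J.1.2 I.1.2 hxz (Fin.lt_def.mp hr2) hyN
      have hmem : ψ ∈ L I.1.1 J.1.2 := by
        have h3 := (ih hψ J).mpr hJ
        rwa [← hr1] at h3
      unfold DepB at hdep
      have h4 : ψ ∈ ReqB ξ (L I.1.1 I.1.2) := hdep.2.2.1 (Or.inl ⟨hmem, hψ⟩)
      exact h4.2
  | diaBb ψ ih =>
    intro hα I
    have hψ : ψ ∈ Cl ξ := cl_diaBb' hα
    have hxy : (I.1.1 : ℕ) < I.1.2 := I.2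
    have hyN : (I.1.2 : ℕ) < N := I.1.2.isLt
    constructor
    · intro hm
      obtain ⟨z, hz1, hz2, hobs⟩ := hC.fulBb _ _ hxy hyN ψ ⟨hψ, hm⟩
      refine ⟨⟨(I.1.1, ⟨z, hz2⟩), Fin.lt_def.mpr (hxy.trans hz1)⟩,
        ⟨rfl, Fin.lt_def.mpr hz1⟩, ?_⟩
      exact (ih hψ _).mp hobs.1
    · intro hs
      obtain ⟨J, hrel, hJ⟩ : ∃ J, relBb I J ∧ sat _ ψ J := hs
      obtain ⟨hr1, hr2⟩ : I.1.1 = J.1.1 ∧ I.1.2 < J.1.2 := hrel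
      have hdep := hC.consB I.1.1 I.1.2 J.1.2 hxy (Fin.lt_def.mp hr2) J.1.2.isLt
      have hmem : ψ ∈ L I.1.1 J.1.2 := by
        have h3 := (ih hψ J).mpr hJ
        rwa [← hr1] at h3
      unfold DepB at hdep
      have h4 : ψ ∈ ReqBb ξ (L I.1.1 I.1.2) := hdep.1 (Or.inl ⟨hmem, hψ⟩)
      exact h4.2
  | diaLb ψ ih =>
    intro hα I
    have hψ : ψ ∈ Cl ξ := cl_diaLb' hα
    have hxy : (I.1.1 : ℕ) < I.1.2 := I.2
    have hyN : (I.1.2 : ℕ) < N := I.1.2.isLt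
    constructor
    · intro hm
      obtain ⟨u, v, huv, hvx, hobs⟩ := hC.fulLb _ _ hxy hyN ψ ⟨hψ, hm⟩
      have hvN : v < N := hvx.trans I.1.1.isLt
      refine ⟨⟨(⟨u, huv.trans hvN⟩, ⟨v, hvN⟩), Fin.lt_def.mpr huv⟩,
        Fin.lt_def.mpr hvx, ?_⟩
      exact (ih hψ _).mp hobs.1
    · intro hs
      obtain ⟨J, hrel, hJ⟩ : ∃ J, relLb I J ∧ sat _ ψ J := hs
      have hr : J.1.2 < I.1.1 := hrel
      have hdep := hC.consLb J.1.1 J.1.2 I.1.1 I.1.2 J.2 (Fin.lt_def.mp hr) hxy hyN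
      have hmem : ψ ∈ L J.1.1 J.1.2 := (ih hψ J).mpr hJ
      unfold DepLb at hdep
      have h4 : ψ ∈ ReqLb ξ (L I.1.1 I.1.2) := hdep (Or.inl ⟨hmem, hψ⟩)
      exact h4.2

lemma sat_xi_elim {P O : Type} [LinearOrder O] {σ : Interval O → Set P} {φ : Formula P}
    {I : Interval O} (h : sat σ (xi φ) I) : ∃ J, sat σ φ J := by
  have h' : ((sat σ φ I ∨ sat σ (Formula.diaBb φ) I) ∨ sat σ (Formula.diaA φ) I) ∨
      sat σ (Formula.diaA (Formula.diaA φ)) I := h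
  rcases h' with ((h | h) | h) | h
  · exact ⟨I, h⟩
  · obtain ⟨J, _, hJ⟩ : ∃ J, relBb I J ∧ sat σ φ J := h
    exact ⟨J, hJ⟩
  · obtain ⟨J, _, hJ⟩ : ∃ J, relA I J ∧ sat σ φ J := h
    exact ⟨J, hJ⟩
  · obtain ⟨J, _, hJ⟩ : ∃ J, relA I J ∧ sat σ (Formula.diaA φ) J := h
    obtain ⟨K, _, hK⟩ : ∃ K, relA J K ∧ sat σ φ K := hJ
    exact ⟨K, hK⟩

/-- An ABB̄L̄-formula `φ` is satisfiable over a finite interval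
structure iff `ξ = φ ∨ ⟨B̄⟩φ ∨ ⟨A⟩φ ∨ ⟨A⟩⟨A⟩φ` belongs to the atom labeling the
initial point `(0,1)` of some finite compass structure. -/
theorem finite_sat_iff_initial {P : Type} (φ : Formula P) :
    (∃ (O : Type) (_ : LinearOrder O) (_ : Finite O)
       (σ : Interval O → Set P) (I : Interval O), sat σ φ I) ↔
    (∃ (N : ℕ) (L : ℕ → ℕ → Set (Formula P)),
       1 < N ∧ IsFinCompass (xi φ) N L ∧ xi φ ∈ L 0 1) := by
  constructor
  · rintro ⟨O, _, _, σ, I, hsat⟩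
    classical
    letI : Fintype O := Fintype.ofFinite O
    haveI hnt : Nontrivial O := ⟨⟨I.1.1, I.1.2, ne_of_lt I.2⟩⟩
    have hN : 1 < Fintype.card O := Fintype.one_lt_card
    let e : Fin (Fintype.card O) ≃o O := monoEquivOfFin O rfl
    refine ⟨Fintype.card O, typeL σ (xi φ) e, hN,
      ⟨⟨?_, ?_, ?_, ?_⟩, ?_, ?_, ?_, ?_⟩, ?_⟩
    · -- isAtom
      intro x y hxy hy
      rw [typeL_eq σ (xi φ) e hxy hy]
      exact typeS_isAtom σ (xi φ) _
    · -- consA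
      intro x y z hxy hyz hz
      rw [typeL_eq σ (xi φ) e hxy (hyz.trans hz), typeL_eq σ (xi φ) e hyz hz]
      exact depA_typeS rfl
    · -- consB
      intro x z y hxz hzy hy
      rw [typeL_eq σ (xi φ) e (hxz.trans hzy) hy, typeL_eq σ (xi φ) e hxz (hzy.trans hy)]
      exact depB_typeS ⟨rfl, e.strictMono (Fin.mk_lt_mk.mpr hzy)⟩
    · -- consLb
      intro u v x y huv hvx hxy hy
      rw [typeL_eq σ (xi φ) e hxy hy,
        typeL_eq σ (xi φ) e huv ((hvx.trans hxy).trans hy)]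
      exact depLb_typeS (e.strictMono (Fin.mk_lt_mk.mpr hvx))
    · -- fulA
      intro x y hxy hy α hα
      rw [typeL_eq σ (xi φ) e hxy hy] at hα
      replace hα := (Set.ext_iff.mp (reqA_typeS σ (xi φ) _) α).mp hα
      obtain ⟨hc, J, hrel, hJ⟩ := hα
      have hr : e ⟨y, hy⟩ = J.1.1 := hrel
      have hyz : y < (e.symm J.1.2 : ℕ) := by
        have h1 : (⟨y, hy⟩ : Fin _) < e.symm J.1.2 := by
          rw [← e.lt_iff_lt, e.apply_symm_apply, hr]
          exact J.2
        exact h1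
      refine ⟨(e.symm J.1.2 : ℕ), hyz, (e.symm J.1.2).isLt, ?_⟩
      rw [typeL_eq σ (xi φ) e hyz (e.symm J.1.2).isLt]
      refine (Set.ext_iff.mp (obs_typeS σ (xi φ) _) α).mpr ?_
      exact ⟨hc, sat_congr hr (e.apply_symm_apply J.1.2) hJ⟩
    · -- fulB
      intro x y hxy hy α hα
      rw [typeL_eq σ (xi φ) e hxy hy] at hα
      replace hα := (Set.ext_iff.mp (reqB_typeS σ (xi φ) _) α).mp hα
      obtain ⟨hc, J, hrel, hJ⟩ := hα
      obtain ⟨hr1, hr2⟩ : e ⟨x, hxy.trans hy⟩ = J.1.1 ∧ J.1.2 < e ⟨y, hy⟩ := hrel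
      have hxz : x < (e.symm J.1.2 : ℕ) := by
        have h1 : (⟨x, hxy.trans hy⟩ : Fin _) < e.symm J.1.2 := by
          rw [← e.lt_iff_lt, e.apply_symm_apply, hr1]
          exact J.2
        exact h1
      have hzy : (e.symm J.1.2 : ℕ) < y := by
        have h1 : e.symm J.1.2 < (⟨y, hy⟩ : Fin _) := by
          rw [← e.lt_iff_lt, e.apply_symm_apply]
          exact hr2
        exact h1
      refine ⟨(e.symm J.1.2 : ℕ), hxz, hzy, ?_⟩
      rw [typeL_eq σ (xi φ) e hxz (hzy.trans hy)]
      refine (Set.ext_iff.mp (obs_typeS σ (xi φ) _) α).mpr ?_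
      exact ⟨hc, sat_congr hr1 (e.apply_symm_apply J.1.2) hJ⟩
    · -- fulBb
      intro x y hxy hy α hα
      rw [typeL_eq σ (xi φ) e hxy hy] at hα
      replace hα := (Set.ext_iff.mp (reqBb_typeS σ (xi φ) _) α).mp hα
      obtain ⟨hc, J, hrel, hJ⟩ := hα
      obtain ⟨hr1, hr2⟩ : e ⟨x, hxy.trans hy⟩ = J.1.1 ∧ e ⟨y, hy⟩ < J.1.2 := hrel
      have hyz : y < (e.symm J.1.2 : ℕ) := by
        have h1 : (⟨y, hy⟩ : Fin _) < e.symm J.1.2 := by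
          rw [← e.lt_iff_lt, e.apply_symm_apply]
          exact hr2
        exact h1
      refine ⟨(e.symm J.1.2 : ℕ), hyz, (e.symm J.1.2).isLt, ?_⟩
      rw [typeL_eq σ (xi φ) e (hxy.trans hyz) (e.symm J.1.2).isLt]
      refine (Set.ext_iff.mp (obs_typeS σ (xi φ) _) α).mpr ?_
      exact ⟨hc, sat_congr hr1 (e.apply_symm_apply J.1.2) hJ⟩
    · -- fulLb
      intro x y hxy hy α hα
      rw [typeL_eq σ (xi φ) e hxy hy] at hα
      replace hα := (Set.ext_iff.mp (reqLb_typeS σ (xi φ) _) α).mp hα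
      obtain ⟨hc, J, hrel, hJ⟩ := hα
      have hr : J.1.2 < e ⟨x, hxy.trans hy⟩ := hrel
      have huv : (e.symm J.1.1 : ℕ) < (e.symm J.1.2 : ℕ) := by
        have h1 : e.symm J.1.1 < e.symm J.1.2 := e.symm.strictMono J.2
        exact h1
      have hvx : (e.symm J.1.2 : ℕ) < x := by
        have h1 : e.symm J.1.2 < (⟨x, hxy.trans hy⟩ : Fin _) := by
          rw [← e.lt_iff_lt, e.apply_symm_apply]
          exact hr
        exact h1
      refine ⟨(e.symm J.1.1 : ℕ), (e.symm J.1.2 : ℕ), huv, hvx, ?_⟩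
      rw [typeL_eq σ (xi φ) e huv (e.symm J.1.2).isLt]
      refine (Set.ext_iff.mp (obs_typeS σ (xi φ) _) α).mpr ?_
      exact ⟨hc, sat_congr (e.apply_symm_apply J.1.1) (e.apply_symm_apply J.1.2) hJ⟩
    · -- xi φ ∈ typeL σ (xi φ) e 0 1
      have h01 : (0 : ℕ) < 1 := one_pos
      rw [typeL_eq σ (xi φ) e h01 hN]
      refine ⟨cl_clp (subf_cl (subf_self (xi φ))), ?_⟩
      have hmin : ∀ o : O, e ⟨0, h01.trans hN⟩ ≤ o := by
        intro o
        rw [show o = e (e.symm o) from (e.apply_symm_apply o).symm, e.le_iff_le]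
        exact Fin.le_def.mpr (Nat.zero_le _)
      have hsucc : ∀ o : O, e ⟨0, h01.trans hN⟩ < o → e ⟨1, hN⟩ ≤ o := by
        intro o ho
        rw [show o = e (e.symm o) from (e.apply_symm_apply o).symm] at ho ⊢
        rw [e.le_iff_le]
        rw [e.lt_iff_lt] at ho
        exact Fin.le_def.mpr (Fin.lt_def.mp ho)
      rcases (hmin I.1.1).lt_or_eq with h0a | h0a
      · rcases (hsucc I.1.1 h0a).lt_or_eq with h1a | h1a
        · exact Or.inr ⟨⟨(e ⟨1, hN⟩, I.1.1), h1a⟩, rfl, I, rfl, hsat⟩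
        · exact Or.inl (Or.inr ⟨I, h1a, hsat⟩)
      · rcases (hsucc I.1.2 (h0a.le.trans_lt I.2)).lt_or_eq with h1b | h1b
        · exact Or.inl (Or.inl (Or.inr ⟨I, ⟨h0a, h1b⟩, hsat⟩))
        · exact Or.inl (Or.inl (Or.inl (sat_congr h0a h1b hsat)))
  · rintro ⟨N, L, hN, hC, hmem⟩
    refine ⟨Fin N, inferInstance, inferInstance,
      fun J : Interval (Fin N) => {a | Formula.atom a ∈ L J.1.1 J.1.2}, ?_⟩
    have h01 : ((⟨0, one_pos.trans hN⟩ : Fin N)) < (⟨1, hN⟩ : Fin N) :=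
      Fin.mk_lt_mk.mpr one_pos
    have hsat : sat (fun J : Interval (Fin N) => {a | Formula.atom a ∈ L J.1.1 J.1.2})
        (xi φ) (⟨(⟨0, one_pos.trans hN⟩, ⟨1, hN⟩), h01⟩ : Interval (Fin N)) :=
      (truth_lemma hC (xi φ) (subf_cl (subf_self (xi φ))) _).mp hmem
    exact sat_xi_elim hsat

end ABBL
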